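/- Let C ⊆ ℝⁿ be a full-dimensional pointed polyhedral cone with polar cone C^∨ = {y : ⟨y,x⟩ ≥ 0 for all x ∈ C}, and assume C ⊆ C^∨. Let W ⊆ C be a compact set not contained in any proper face of C. Then K = {x ∈ C : ⟨w,x⟩ ≤ 1 for all w ∈ W} is a bounded C-anti-blocking body, and for every c ∈ C there exists μ > 0 with μc ∈ K. -/
import Mathlib


open Set MeasureTheory Pointwise
open scoped RealInnerProductSpace

/-- The polar (dual) cone `C^∨ = {y : ⟪x, y⟫ ≥ 0 for all x ∈ C}`. -/
def dualCone {n : ℕ} (C : Set (EuclideanSpace ℝ (Fin n))) :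
    Set (EuclideanSpace ℝ (Fin n)) :=
  {y | ∀ x ∈ C, 0 ≤ ⟪x, y⟫}

/-- A polyhedral cone: a finite intersection of linear halfspaces. -/
def IsPolyhedralCone {n : ℕ} (C : Set (EuclideanSpace ℝ (Fin n))) : Prop :=
  ∃ s : Finset (EuclideanSpace ℝ (Fin n)), C = {x | ∀ w ∈ s, 0 ≤ ⟪w, x⟫}

/-- For a full-dimensional pointed polyhedral cone `C ⊆ C^∨` and a compact `W ⊆ C`
not contained in any proper face of `C`, the set
`K = {x ∈ C : ⟪w, x⟫ ≤ 1 ∀ w ∈ W}` is a bounded `C`-anti-blocking body which is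
proper: every ray of `C` meets `K` in a nontrivial segment. -/
theorem polyhedral_Cab_representation {n : ℕ}
    {C W : Set (EuclideanSpace ℝ (Fin n))}
    (hpoly : IsPolyhedralCone C)
    (hpointed : C ∩ (-C) ⊆ {0})
    (hfull : (interior C).Nonempty)
    (hCC : C ⊆ dualCone C)
    (hWC : W ⊆ C) (hWcomp : IsCompact W)
    (hWface : ∀ u ∈ dualCone C, (∀ w ∈ W, ⟪u, w⟫ = 0) → ∀ x ∈ C, ⟪u, x⟫ = 0) :
    Bornology.IsBounded {x ∈ C | ∀ w ∈ W, ⟪w, x⟫ ≤ 1} ∧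
      (∀ y ∈ {x ∈ C | ∀ w ∈ W, ⟪w, x⟫ ≤ 1}, ∀ x ∈ C,
        y - x ∈ dualCone C → x ∈ {x ∈ C | ∀ w ∈ W, ⟪w, x⟫ ≤ 1}) ∧
      ∀ c ∈ C, ∃ μ : ℝ, 0 < μ ∧ μ • c ∈ {x ∈ C | ∀ w ∈ W, ⟪w, x⟫ ≤ 1} := by
  obtain ⟨s, hs⟩ := hpoly
  -- C is closed
  have hCclosed : IsClosed C := by
    rw [hs]
    have heq : {x : EuclideanSpace ℝ (Fin n) | ∀ w ∈ s, 0 ≤ ⟪w, x⟫} =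
        ⋂ w ∈ s, {x | 0 ≤ ⟪w, x⟫} := by ext x; simp
    rw [heq]
    exact isClosed_biInter fun w _ =>
      isClosed_le continuous_const (continuous_const.inner continuous_id)
  -- C is a cone
  have hCcone : ∀ x ∈ C, ∀ t : ℝ, 0 ≤ t → t • x ∈ C := by
    intro x hx t ht
    rw [hs] at hx ⊢
    intro w hw
    rw [inner_smul_right]
    exact mul_nonneg ht (hx w hw)
  -- positivity on unit vectors of C
  have hpos : ∀ u ∈ C, ‖u‖ = 1 → ∃ w ∈ W, 0 < ⟪w, u⟫ := by
    intro u hu hnorm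
    by_contra h
    push_neg at h
    have hzero : ∀ w ∈ W, ⟪u, w⟫ = 0 := by
      intro w hw
      have h1 : ⟪w, u⟫ ≤ 0 := h w hw
      have h2 : 0 ≤ ⟪w, u⟫ := hCC hu w (hWC hw)
      rw [real_inner_comm]; linarith
    have h3 := hWface u (hCC hu) hzero u hu
    have h4 : u = 0 := by
      rwa [inner_self_eq_zero (𝕜 := ℝ)] at h3
    rw [h4] at hnorm
    simp at hnorm
  -- main : uniform positivity on the unit sphere
  have hmain : ∃ m : ℝ, 0 < m ∧ ∀ u ∈ C, ‖u‖ = 1 → ∃ w ∈ W, m ≤ ⟪w, u⟫ := by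
    set S : Set (EuclideanSpace ℝ (Fin n)) := C ∩ Metric.sphere 0 1 with hSdef
    have hmemS : ∀ u, u ∈ C → ‖u‖ = 1 → u ∈ S := by
      intro u hu hn
      exact ⟨hu, by simpa [mem_sphere_zero_iff_norm] using hn⟩
    rcases eq_empty_or_nonempty S with hSe | hSne
    · refine ⟨1, one_pos, fun u hu hn => absurd (hmemS u hu hn) ?_⟩
      rw [hSe]; simp
    · have hScomp : IsCompact S := (isCompact_sphere (0 : EuclideanSpace ℝ (Fin n)) 1).inter_left hCclosed
      have hchoice : ∀ p : S, ∃ w ∈ W, 0 < ⟪w, (p : EuclideanSpace ℝ (Fin n))⟫ := by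
        intro p
        exact hpos p p.2.1 (by simpa [mem_sphere_zero_iff_norm] using p.2.2)
      choose w hwW hwpos using hchoice
      set U : S → Set (EuclideanSpace ℝ (Fin n)) :=
        fun p => {v | ⟪w p, (p : EuclideanSpace ℝ (Fin n))⟫ / 2 < ⟪w p, v⟫} with hUdef
      have hUopen : ∀ p, IsOpen (U p) := fun p =>
        isOpen_lt continuous_const (continuous_const.inner continuous_id)
      have hcover : S ⊆ ⋃ p, U p := by
        intro x hx
        refine mem_iUnion.mpr ⟨⟨x, hx⟩, ?_⟩
        have := hwpos ⟨x, hx⟩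
        simp only [hUdef, mem_setOf_eq]
        linarith
      obtain ⟨t, ht⟩ := hScomp.elim_finite_subcover U hUopen hcover
      have htne : t.Nonempty := by
        rcases hSne with ⟨x, hx⟩
        obtain ⟨p, hp, _⟩ := mem_iUnion₂.mp (ht hx)
        exact ⟨p, hp⟩
      refine ⟨t.inf' htne fun p => ⟪w p, (p : EuclideanSpace ℝ (Fin n))⟫ / 2, ?_, ?_⟩
      · rw [Finset.lt_inf'_iff]
        exact fun p _ => half_pos (hwpos p)
      · intro u hu hn
        obtain ⟨p, hp, hup⟩ := mem_iUnion₂.mp (ht (hmemS u hu hn))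
        refine ⟨w p, hwW p, ?_⟩
        have h1 : ⟪w p, (p : EuclideanSpace ℝ (Fin n))⟫ / 2 < ⟪w p, u⟫ := hup
        have h2 := Finset.inf'_le (fun p => ⟪w p, (p : EuclideanSpace ℝ (Fin n))⟫ / 2) hp
        linarith
  obtain ⟨m, hm, hmK⟩ := hmain
  refine ⟨?_, ?_, ?_⟩
  · apply Bornology.IsBounded.subset (Metric.isBounded_closedBall (x := (0 : EuclideanSpace ℝ (Fin n))) (r := 1 / m))
    intro x hx
    rw [Metric.mem_closedBall, dist_zero_right]
    rcases eq_or_ne x 0 with rfl | hx0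
    · simp only [norm_zero]
      positivity
    · have hnx : 0 < ‖x‖ := norm_pos_iff.mpr hx0
      have hu : (‖x‖⁻¹ • x) ∈ C := hCcone x hx.1 _ (by positivity)
      have hun : ‖‖x‖⁻¹ • x‖ = 1 := by
        rw [norm_smul, norm_inv, norm_norm]
        field_simp
      obtain ⟨v, hvW, hmv⟩ := hmK _ hu hun
      have hle1 : ⟪v, x⟫ ≤ 1 := hx.2 v hvW
      rw [inner_smul_right] at hmv
      have key : m * ‖x‖ ≤ ⟪v, x⟫ := by
        have : ⟪v, x⟫ = ‖x‖ * (‖x‖⁻¹ * ⟪v, x⟫) := by field_simp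
        rw [this]
        calc m * ‖x‖ = ‖x‖ * m := by ring
        _ ≤ ‖x‖ * (‖x‖⁻¹ * ⟪v, x⟫) := by
            exact mul_le_mul_of_nonneg_left hmv hnx.le
      rw [le_div_iff₀ hm]
      nlinarith
  · rintro y ⟨hyC, hyW⟩ x hx hyx
    refine ⟨hx, fun v hv => ?_⟩
    have h1 : 0 ≤ ⟪v, y - x⟫ := hyx v (hWC hv)
    have h2 := hyW v hv
    rw [inner_sub_right] at h1
    linarith
  · intro c hc
    obtain ⟨R, hR⟩ := hWcomp.isBounded.exists_norm_le
    set M : ℝ := max (R * ‖c‖) 1 with hMdef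
    have hM1 : (1 : ℝ) ≤ M := le_max_right _ _
    have hM0 : 0 < M := lt_of_lt_of_le one_pos hM1
    refine ⟨M⁻¹, inv_pos.mpr hM0, hCcone c hc _ (inv_nonneg.mpr hM0.le), ?_⟩
    intro v hv
    rw [inner_smul_right]
    have h1 : ⟪v, c⟫ ≤ M := by
      calc ⟪v, c⟫ ≤ ‖v‖ * ‖c‖ := real_inner_le_norm v c
      _ ≤ R * ‖c‖ := mul_le_mul_of_nonneg_right (hR v hv) (norm_nonneg c)
      _ ≤ M := le_max_left _ _
    calc M⁻¹ * ⟪v, c⟫ ≤ M⁻¹ * M := mul_le_mul_of_nonneg_left h1 (inv_nonneg.mpr hM0.le)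
    _ = 1 := inv_mul_cancel₀ hM0.ne'
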